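/- Let f : W → X be L_f-Lipschitz (1-norm), φ : X → ℝ be L_φ-Lipschitz (1-norm), μ, σ a calibrated model (‖f - μ‖₁ ≤ β·σ pointwise, σ ≥ 0), and U(w) = φ(μ(w)) + L_φ·β·σ(w). Suppose x, x₀ ∈ X and u₀ ∈ U with ‖x - x₀‖₁ ≤ τ, σ(x, u₀) ≤ σ̃, and U(x₀, u₀) < max{φ(x₀) - η, 0} - L_φ·L_f·τ - L_φ·τ - 2·L_φ·β·σ̃. Then U(x, u₀) < max{φ(x) - η, 0}. -/

import Mathlib

/-- Core of the discretization-equivalence result: strict feasibility with margin terms at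
a discretized state x₀ (with its dataset control u₀) implies the original feasibility
condition U(x, u₀) < max{φ(x) - η, 0} at every state x within 1-norm distance τ of x₀,
provided the posterior uncertainty at (x, u₀) is bounded by σ̃. -/
theorem feasibility_transfer {nx nu : ℕ}
    (f μ : ((Fin nx → ℝ) × (Fin nu → ℝ)) → (Fin nx → ℝ))
    (σ : ((Fin nx → ℝ) × (Fin nu → ℝ)) → ℝ)
    (φ : (Fin nx → ℝ) → ℝ) (Lf Lφ β η τ σtil : ℝ)
    (hLf : 0 ≤ Lf) (hLφ : 0 ≤ Lφ) (hβ : 0 < β) (hτ : 0 ≤ τ)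
    (hf : ∀ p q : (Fin nx → ℝ) × (Fin nu → ℝ),
      ∑ i, |f p i - f q i| ≤ Lf * ((∑ i, |p.1 i - q.1 i|) + ∑ j, |p.2 j - q.2 j|))
    (hφ : ∀ x y : Fin nx → ℝ, |φ x - φ y| ≤ Lφ * ∑ i, |x i - y i|)
    (hσ : ∀ w, 0 ≤ σ w)
    (hcal : ∀ w, ∑ i, |f w i - μ w i| ≤ β * σ w)
    (x x₀ : Fin nx → ℝ) (u₀ : Fin nu → ℝ)
    (hclose : ∑ i, |x i - x₀ i| ≤ τ)
    (hσx : σ (x, u₀) ≤ σtil)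
    (hfeas : φ (μ (x₀, u₀)) + Lφ * β * σ (x₀, u₀) <
      max (φ x₀ - η) 0 - Lφ * Lf * τ - Lφ * τ - 2 * Lφ * β * σtil) :
    φ (μ (x, u₀)) + Lφ * β * σ (x, u₀) < max (φ x - η) 0 := by
  -- Step 1: φ(μ(x,u₀)) ≤ φ(f(x,u₀)) + Lφ*β*σ(x,u₀)
  have h1 : φ (μ (x, u₀)) ≤ φ (f (x, u₀)) + Lφ * (β * σ (x, u₀)) := by
    have := hφ (μ (x, u₀)) (f (x, u₀))
    have hb : ∑ i, |μ (x, u₀) i - f (x, u₀) i| ≤ β * σ (x, u₀) := by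
      have := hcal (x, u₀)
      simpa [abs_sub_comm] using this
    have := le_trans (le_abs_self (φ (μ (x, u₀)) - φ (f (x, u₀)))) ((hφ _ _).trans (mul_le_mul_of_nonneg_left hb hLφ))
    linarith
  -- Step 2: φ(f(x,u₀)) ≤ φ(f(x₀,u₀)) + Lφ*(Lf*τ)
  have h2 : φ (f (x, u₀)) ≤ φ (f (x₀, u₀)) + Lφ * (Lf * τ) := by
    have hd : ∑ i, |f (x, u₀) i - f (x₀, u₀) i| ≤ Lf * τ := by
      have := hf (x, u₀) (x₀, u₀)
      simp only [sub_self, abs_zero, Finset.sum_const_zero, add_zero] at this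
      exact this.trans (mul_le_mul_of_nonneg_left hclose hLf)
    have := le_trans (le_abs_self (φ (f (x, u₀)) - φ (f (x₀, u₀)))) ((hφ _ _).trans (mul_le_mul_of_nonneg_left hd hLφ))
    linarith
  -- Step 3: φ(f(x₀,u₀)) ≤ φ(μ(x₀,u₀)) + Lφ*(β*σ(x₀,u₀))
  have h3 : φ (f (x₀, u₀)) ≤ φ (μ (x₀, u₀)) + Lφ * (β * σ (x₀, u₀)) := by
    have hb : ∑ i, |f (x₀, u₀) i - μ (x₀, u₀) i| ≤ β * σ (x₀, u₀) := hcal _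
    have := le_trans (le_abs_self (φ (f (x₀, u₀)) - φ (μ (x₀, u₀)))) ((hφ _ _).trans (mul_le_mul_of_nonneg_left hb hLφ))
    linarith
  -- Step 4: max(φ x₀ - η) 0 ≤ max(φ x - η) 0 + Lφ*τ
  have h4 : max (φ x₀ - η) 0 ≤ max (φ x - η) 0 + Lφ * τ := by
    have hx : φ x₀ ≤ φ x + Lφ * τ := by
      have := le_trans (le_abs_self (φ x₀ - φ x))
        ((hφ x₀ x).trans (mul_le_mul_of_nonneg_left (by simpa [abs_sub_comm] using hclose) hLφ))
      linarith
    apply max_le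
    · exact le_trans (by linarith) (add_le_add_left (le_max_left _ _) _)
    · exact le_trans (by positivity) (add_le_add_left (le_max_right _ _) _)
  have h5 : Lφ * β * σ (x, u₀) ≤ Lφ * β * σtil :=
    mul_le_mul_of_nonneg_left hσx (by positivity)
  nlinarith [h1, h2, h3, h4, h5]
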